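/- (Lemma on unique zero, Lemma 7.1/Appendix A) Let M, Λ > 0 with 0 < M < 1/(3√Λ), let r_b < r_c be the positive roots of 1-μ(r) = 0, and let ℓ ≥ 1 be an integer. Define h_ℓ(r) = ℓ(ℓ+1)(1-3M/r)/r³ + (M/r⁴)(3 - 8M/r) + MΛ/(3r²) - 2Λ²r/9. Then h_ℓ has exactly one zero r_{h_ℓ} in the open interval (r_b, r_c). -/

import Mathlib

open Set Filter

noncomputable def Afun (L M Λ : ℝ) : ℝ → ℝ :=
  fun r => L - 3*L*M * r⁻¹ + 3*M * r⁻¹ - 8*M^2 * (r^2)⁻¹ + M*Λ/3 * r - 2*Λ^2/9 * r^4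

noncomputable def A1 (L M Λ : ℝ) : ℝ → ℝ :=
  fun r => 3*L*M * (r^2)⁻¹ - 3*M * (r^2)⁻¹ + 16*M^2 * (r^3)⁻¹ + M*Λ/3 - 8*Λ^2/9 * r^3

noncomputable def A2 (L M Λ : ℝ) : ℝ → ℝ :=
  fun r => (6*M - 6*L*M) * (r^3)⁻¹ - 48*M^2 * (r^4)⁻¹ - 8*Λ^2/3 * r^2

lemma hasDerivAt_Afun (L M Λ x : ℝ) (hx : x ≠ 0) :
    HasDerivAt (Afun L M Λ) (A1 L M Λ x) x := by
  have h1 : HasDerivAt (fun r : ℝ => r⁻¹) (-(x^2)⁻¹) x := hasDerivAt_inv hx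
  have h2 : HasDerivAt (fun r : ℝ => (r^2)⁻¹) (-((2:ℕ) * x ^ (2-1)) / (x^2)^2) x :=
    (hasDerivAt_pow 2 x).inv (pow_ne_zero 2 hx)
  have h := (((((hasDerivAt_const x L).sub (h1.const_mul (3*L*M))).add
      (h1.const_mul (3*M))).sub (h2.const_mul (8*M^2))).add
      ((hasDerivAt_id x).const_mul (M*Λ/3))).sub ((hasDerivAt_pow 4 x).const_mul (2*Λ^2/9))
  refine h.congr_deriv ?_
  simp only [A1]
  field_simp
  ring

lemma hasDerivAt_A1 (L M Λ x : ℝ) (hx : x ≠ 0) :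
    HasDerivAt (A1 L M Λ) (A2 L M Λ x) x := by
  have h2 : HasDerivAt (fun r : ℝ => (r^2)⁻¹) (-((2:ℕ) * x ^ (2-1)) / (x^2)^2) x :=
    (hasDerivAt_pow 2 x).inv (pow_ne_zero 2 hx)
  have h3 : HasDerivAt (fun r : ℝ => (r^3)⁻¹) (-((3:ℕ) * x ^ (3-1)) / (x^3)^2) x :=
    (hasDerivAt_pow 3 x).inv (pow_ne_zero 3 hx)
  have h := ((((h2.const_mul (3*L*M)).sub (h2.const_mul (3*M))).add
      (h3.const_mul (16*M^2))).add (hasDerivAt_const x (M*Λ/3))).sub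
      ((hasDerivAt_pow 3 x).const_mul (8*Λ^2/9))
  refine h.congr_deriv ?_
  simp only [A2]
  field_simp
  ring

lemma Afun_strictConcave (L M Λ : ℝ) (hM : 0 < M) (hΛ : 0 < Λ) (hL : 2 ≤ L) :
    StrictConcaveOn ℝ (Set.Ioi (0:ℝ)) (Afun L M Λ) := by
  apply strictConcaveOn_of_deriv2_neg (convex_Ioi 0)
  · intro y hy
    exact (hasDerivAt_Afun L M Λ y (ne_of_gt hy)).continuousAt.continuousWithinAt
  · intro x hx
    rw [interior_Ioi] at hx
    have hx0 : (0:ℝ) < x := hx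
    have e1 : deriv (Afun L M Λ) =ᶠ[nhds x] A1 L M Λ := by
      filter_upwards [isOpen_Ioi.eventually_mem hx] with y hy
      exact (hasDerivAt_Afun L M Λ y (ne_of_gt hy)).deriv
    have h2 : deriv^[2] (Afun L M Λ) x = A2 L M Λ x := by
      simp only [Function.iterate_succ_apply', Function.iterate_zero_apply,
        Function.iterate_one]
      rw [e1.deriv_eq, (hasDerivAt_A1 L M Λ x (ne_of_gt hx0)).deriv]
    rw [h2]
    have t1 : (6*M - 6*L*M) * (x^3)⁻¹ < 0 := by
      apply mul_neg_of_neg_of_pos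
      · nlinarith
      · positivity
    have t2 : (0:ℝ) ≤ 48*M^2 * (x^4)⁻¹ := by positivity
    have t3 : (0:ℝ) < 8*Λ^2/3 * x^2 := by positivity
    simp only [A2]
    linarith

set_option maxHeartbeats 1000000 in
/-- Lemma 7.1 / Appendix A: for every `ℓ ≥ 1`, the function
`h_ℓ(r) = ℓ(ℓ+1)(1-3M/r)/r³ + (M/r⁴)(3-8M/r) + MΛ/(3r²) - 2Λ²r/9`
has exactly one zero in the open interval `(r_b, r_c)`. -/
theorem h_ell_unique_zero (M Λ rb rc : ℝ) (hM : 0 < M) (hΛ : 0 < Λ)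
    (hne : M < 1 / (3 * Real.sqrt Λ)) (hrb : 0 < rb) (hlt : rb < rc)
    (hrootb : 1 - (2 * M / rb + Λ / 3 * rb ^ 2) = 0)
    (hrootc : 1 - (2 * M / rc + Λ / 3 * rc ^ 2) = 0)
    (ℓ : ℕ) (hℓ : 1 ≤ ℓ) :
    ∃! r : ℝ, r ∈ Set.Ioo rb rc ∧
      (ℓ : ℝ) * (ℓ + 1) * (1 - 3 * M / r) / r ^ 3
        + (M / r ^ 4) * (3 - 8 * M / r) + M * Λ / (3 * r ^ 2)
        - 2 * Λ ^ 2 * r / 9 = 0 := by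
  have hrc : 0 < rc := lt_trans hrb hlt
  obtain ⟨L, hLdef⟩ : ∃ L : ℝ, L = (ℓ : ℝ) * ((ℓ : ℝ) + 1) := ⟨_, rfl⟩
  have hℓ1 : (1:ℝ) ≤ (ℓ:ℝ) := by exact_mod_cast hℓ
  have hL : 2 ≤ L := by
    rw [hLdef]
    nlinarith [mul_le_mul_of_nonneg_left hℓ1 (by linarith : (0:ℝ) ≤ (ℓ:ℝ))]
  -- cleared root equations
  have eb : 3 * rb = 6 * M + Λ * rb ^ 3 := by
    field_simp at hrootb
    linarith
  have ec : 3 * rc = 6 * M + Λ * rc ^ 3 := by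
    field_simp at hrootc
    linarith
  -- 9 Λ M² < 1
  have hsΛ : 0 < Real.sqrt Λ := Real.sqrt_pos.mpr hΛ
  have hsq : 9 * Λ * M ^ 2 < 1 := by
    have h1 : M * (3 * Real.sqrt Λ) < 1 := by
      rw [lt_div_iff₀ (by positivity)] at hne
      linarith
    have h2 : Real.sqrt Λ ^ 2 = Λ := Real.sq_sqrt hΛ.le
    have hx : 0 < 3 * M * Real.sqrt Λ := by positivity
    have h3' : (3 * M * Real.sqrt Λ) ^ 2 < 1 := by nlinarith
    nlinarith [h3']
  -- rb < 3M < rc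
  have h3 : Λ * (rb ^ 2 + rb * rc + rc ^ 2) = 3 := by
    have hne' : rc - rb ≠ 0 := sub_ne_zero.mpr hlt.ne'
    have hkey : (rc - rb) * (Λ * (rb ^ 2 + rb * rc + rc ^ 2) - 3) = 0 := by
      linear_combination eb - ec
    rcases mul_eq_zero.mp hkey with h | h
    · exact absurd h hne'
    · linarith
  have h2M : 6 * M = Λ * rb * rc * (rb + rc) := by linear_combination (-1) * eb - rb * h3
  have hid : M * (1 - 9 * Λ * M ^ 2) =
      -(Λ / 3) * ((3 * M - rb) * (3 * M - rc)) * (3 * M + rb + rc) := by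
    linear_combination (-M) * h3 - (1/3 : ℝ) * h2M
  have hP : (3 * M - rb) * (3 * M - rc) < 0 := by
    by_contra hcon
    push_neg at hcon
    have h1 : 0 < M * (1 - 9 * Λ * M ^ 2) := mul_pos hM (by linarith)
    have h2 : (0:ℝ) < 3 * M + rb + rc := by linarith
    have h4 : 0 ≤ Λ * ((3 * M - rb) * (3 * M - rc)) * (3 * M + rb + rc) :=
      mul_nonneg (mul_nonneg hΛ.le hcon) h2.le
    have h5 : -(Λ / 3) * ((3 * M - rb) * (3 * M - rc)) * (3 * M + rb + rc) ≤ 0 := by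
      linarith
    linarith [hid]
  have h3b : rb < 3 * M := by
    by_contra hcon'
    push_neg at hcon'
    have : 0 ≤ (3 * M - rb) * (3 * M - rc) := by
      have := mul_nonneg (show (0:ℝ) ≤ rb - 3 * M by linarith)
        (show (0:ℝ) ≤ rc - 3 * M by linarith)
      linarith [this]
    linarith
  have h3c : 3 * M < rc := by
    by_contra hcon'
    push_neg at hcon'
    have : 0 ≤ (3 * M - rb) * (3 * M - rc) := by
      have := mul_nonneg (show (0:ℝ) ≤ 3 * M - rb by linarith)
        (show (0:ℝ) ≤ 3 * M - rc by linarith)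
      linarith [this]
    linarith
  -- values of A at horizons
  have hAval : ∀ r : ℝ, 0 < r → 3 * r = 6 * M + Λ * r ^ 3 →
      Afun L M Λ r * r ^ 2 = L * r * (r - 3 * M) - 2 * (r - 3 * M) ^ 2 := by
    intro r hr er
    have hr0 : r ≠ 0 := ne_of_gt hr
    have hstep : Afun L M Λ r * r ^ 2
        = L*r^2 - 3*L*M*r + 3*M*r - 8*M^2 + M*Λ/3*r^3 - 2*Λ^2/9*r^6 := by
      simp only [Afun]
      field_simp
    rw [hstep]
    linear_combination (-(M/3) + (2/9) * (Λ * r ^ 3 + 3 * r - 6 * M)) * er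
  have hAb : Afun L M Λ rb < 0 := by
    have h := hAval rb hrb eb
    have hf1 : (L - 2) * (rb * (rb - 3 * M)) ≤ 0 := by
      have hin : rb * (rb - 3 * M) ≤ 0 :=
        mul_nonpos_iff.mpr (Or.inl ⟨hrb.le, by linarith⟩)
      exact mul_nonpos_iff.mpr (Or.inl ⟨by linarith, hin⟩)
    have hf2 : 6 * M * (rb - 3 * M) < 0 :=
      mul_neg_of_pos_of_neg (by linarith) (by linarith)
    have hneg : L * rb * (rb - 3 * M) - 2 * (rb - 3 * M) ^ 2 < 0 := by linarith [hf1, hf2]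
    by_contra hc
    push_neg at hc
    have := mul_nonneg hc (sq_nonneg rb)
    linarith [h, hneg, this]
  have hAc : 0 < Afun L M Λ rc := by
    have h := hAval rc hrc ec
    have hf : 0 < (rc - 3 * M) * ((L - 2) * rc + 6 * M) := by
      have h1 : 0 ≤ (L - 2) * rc := mul_nonneg (by linarith) hrc.le
      exact mul_pos (by linarith) (by linarith)
    have hpos : 0 < L * rc * (rc - 3 * M) - 2 * (rc - 3 * M) ^ 2 := by linarith [hf]
    by_contra hc
    push_neg at hc
    have := mul_nonneg (neg_nonneg.mpr hc) (sq_nonneg rc)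
    linarith [h, hpos, this]
  -- relation between h and A
  have hrel : ∀ r : ℝ, 0 < r →
      ((ℓ : ℝ) * (ℓ + 1) * (1 - 3 * M / r) / r ^ 3
        + (M / r ^ 4) * (3 - 8 * M / r) + M * Λ / (3 * r ^ 2)
        - 2 * Λ ^ 2 * r / 9 = 0 ↔ Afun L M Λ r = 0) := by
    intro r hr
    have hr0 : r ≠ 0 := ne_of_gt hr
    have hA : Afun L M Λ r = ((ℓ : ℝ) * (ℓ + 1) * (1 - 3 * M / r) / r ^ 3
        + (M / r ^ 4) * (3 - 8 * M / r) + M * Λ / (3 * r ^ 2)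
        - 2 * Λ ^ 2 * r / 9) * r ^ 3 := by
      simp only [Afun, hLdef]
      field_simp
      ring
    constructor
    · intro h; rw [hA, h, zero_mul]
    · intro h
      rw [hA] at h
      rcases mul_eq_zero.mp h with h' | h'
      · exact h'
      · exact absurd h' (pow_ne_zero 3 hr0)
  -- strict concavity
  have hconc := Afun_strictConcave L M Λ hM hΛ hL
  -- uniqueness helper: no two distinct zeros of A in (rb, rc)
  have huniq : ∀ x y : ℝ, x ∈ Set.Ioo rb rc → y ∈ Set.Ioo rb rc →
      Afun L M Λ x = 0 → Afun L M Λ y = 0 → x < y → False := by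
    intro x y hxm hym hxz hyz hxy
    have hx0 : (0:ℝ) < x := lt_trans hrb hxm.1
    have hy0 : (0:ℝ) < y := lt_trans hrb hym.1
    have hyc : y < rc := hym.2
    set a : ℝ := (rc - y) / (rc - x) with ha
    set b : ℝ := (y - x) / (rc - x) with hb
    have hden : (0:ℝ) < rc - x := by linarith
    have hap : 0 < a := div_pos (by linarith) hden
    have hbp : 0 < b := div_pos (by linarith) hden
    have hab : a + b = 1 := by
      rw [ha, hb]
      field_simp
      ring
    have hcomb : a • x + b • rc = y := by
      simp only [smul_eq_mul, ha, hb]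
      field_simp
      ring
    have := hconc.2 (Set.mem_Ioi.mpr hx0) (Set.mem_Ioi.mpr hrc)
      (by intro h; rw [h] at hxy; linarith) hap hbp hab
    rw [hcomb, hxz] at this
    simp only [smul_eq_mul, mul_zero, zero_add] at this
    nlinarith [mul_pos hbp hAc]
  -- existence via IVT
  have hcont : ContinuousOn (Afun L M Λ) (Set.Icc rb rc) := by
    intro y hy
    have : (0:ℝ) < y := lt_of_lt_of_le hrb hy.1
    exact (hasDerivAt_Afun L M Λ y (ne_of_gt this)).continuousAt.continuousWithinAt
  have hsub := intermediate_value_Ioo hlt.le hcont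
  have h0mem : (0:ℝ) ∈ Set.Ioo (Afun L M Λ rb) (Afun L M Λ rc) := ⟨hAb, hAc⟩
  obtain ⟨r0, hr0mem, hr0z⟩ := hsub h0mem
  have hr0pos : (0:ℝ) < r0 := lt_trans hrb hr0mem.1
  refine ⟨r0, ⟨hr0mem, (hrel r0 hr0pos).mpr hr0z⟩, ?_⟩
  rintro y ⟨hymem, hyz⟩
  have hypos : (0:ℝ) < y := lt_trans hrb hymem.1
  have hyA : Afun L M Λ y = 0 := (hrel y hypos).mp hyz
  rcases lt_trichotomy y r0 with h | h | h
  · exact absurd (huniq y r0 hymem hr0mem hyA hr0z h) (fun f => f)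
  · exact h
  · exact absurd (huniq r0 y hr0mem hymem hr0z hyA h) (fun f => f)
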